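/- Let q = p^m, k | q-1, n = (q-1)/k, a = ord_n(p), and k_a = (p^a-1)/n. Then the set R_k of nonzero k-th powers in F_q equals the set of nonzero k_a-th powers of elements of the subfield F_a = {x ∈ F_q : x^{p^a} = x}, i.e. R_k = {w^{k_a} : w ∈ F_a, w ≠ 0}. -/
import Mathlib


/-- The set of nonzero `k`-th powers in a field. -/
def Rset (F : Type*) [Field F] (k : ℕ) : Set F := {x | ∃ y : F, y ≠ 0 ∧ y ^ k = x}

/-- `R_k` equals the set of nonzero `k_a`-th powers of elements of the subfield
`F_a = {x : x^(p^a) = x}`, where `a = ord_n(p)`, `k_a = (p^a-1)/n`. -/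
theorem stmt_6 (F : Type*) [Field F] [Fintype F] (p m : ℕ) (hp : p.Prime) (hm : 0 < m)
    (hcard : Fintype.card F = p ^ m) (k : ℕ) (hkpos : 0 < k) (hk : k ∣ p ^ m - 1)
    (n a ka : ℕ) (hn : n = (p ^ m - 1) / k) (ha : a = orderOf (p : ZMod n))
    (hka : ka = (p ^ a - 1) / n) :
    Rset F k = {x : F | ∃ w : F, w ^ p ^ a = w ∧ w ≠ 0 ∧ w ^ ka = x} := by
  classical
  have hq1 : 1 < p ^ m := Nat.one_lt_pow hm.ne' hp.one_lt
  have hq0 : 0 < p ^ m - 1 := Nat.sub_pos_of_lt hq1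
  have hnk : n * k = p ^ m - 1 := by
    rw [hn, Nat.div_mul_cancel hk]
  have hnpos : 0 < n := by
    rw [hn]; exact Nat.div_pos (Nat.le_of_dvd hq0 hk) hkpos
  have hndvd : n ∣ p ^ m - 1 := ⟨k, hnk.symm⟩
  -- p^m ≡ 1 mod n
  have hpm1 : ((p : ZMod n)) ^ m = 1 := by
    have h1 : p ^ m ≡ 1 [MOD n] := (Nat.modEq_iff_dvd' hq1.le).mpr hndvd |>.symm
    have := (ZMod.natCast_eq_natCast_iff _ _ _).mpr h1
    push_cast at this
    exact this
  have ham : a ∣ m := by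
    rw [ha]; exact orderOf_dvd_of_pow_eq_one hpm1
  have hapos : 0 < a := Nat.pos_of_dvd_of_pos ham hm
  have hpa1 : 1 ≤ p ^ a := Nat.one_le_pow _ _ hp.pos
  -- n ∣ p^a - 1
  have hpaZ : ((p : ZMod n)) ^ a = 1 := by rw [ha]; exact pow_orderOf_eq_one _
  have hndvda : n ∣ p ^ a - 1 := by
    have h1 : ((p ^ a : ℕ) : ZMod n) = ((1 : ℕ) : ZMod n) := by push_cast; exact hpaZ
    have h2 : p ^ a ≡ 1 [MOD n] := (ZMod.natCast_eq_natCast_iff _ _ _).mp h1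
    exact (Nat.modEq_iff_dvd' hpa1).mp h2.symm
  have hnka : n * ka = p ^ a - 1 := by
    rw [hka, Nat.mul_div_cancel' hndvda]
  -- p^a - 1 ∣ p^m - 1
  have hdvdpa : p ^ a - 1 ∣ p ^ m - 1 := by
    obtain ⟨c, rfl⟩ := ham
    have := Nat.sub_dvd_pow_sub_pow (p ^ a) 1 c
    simpa [← pow_mul] using this
  set c : ℕ := (p ^ m - 1) / (p ^ a - 1) with hc
  have hc1 : c * (p ^ a - 1) = p ^ m - 1 := Nat.div_mul_cancel hdvdpa
  have hck : c * ka = k := by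
    have h1 : n * (c * ka) = n * k := by
      rw [hnk, mul_comm n (c * ka), mul_assoc, mul_comm ka n, hnka, hc1]
    exact Nat.eq_of_mul_eq_mul_left hnpos h1
  -- cyclic generator
  obtain ⟨g, hg⟩ := IsCyclic.exists_generator (α := Fˣ)
  have horder : orderOf g = p ^ m - 1 := by
    rw [orderOf_eq_card_of_forall_mem_zpowers hg, Nat.card_eq_fintype_card, Fintype.card_units, hcard]
  have hgpow : g ^ (p ^ m - 1) = 1 := by rw [← horder]; exact pow_orderOf_eq_one g
  -- key decomposition: any x ≠ 0 with x^n = 1 is g^(k*j)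
  have key : ∀ x : F, x ≠ 0 → x ^ n = 1 → ∃ j : ℕ, ((g ^ (k * j) : Fˣ) : F) = x := by
    intro x hx hxn
    set u : Fˣ := Units.mk0 x hx with hu
    obtain ⟨i, hi⟩ : ∃ i : ℕ, g ^ i = u := by
      have := hg u
      rwa [← mem_powers_iff_mem_zpowers, Submonoid.mem_powers_iff] at this
    have hun : u ^ n = 1 := by
      ext
      push_cast
      simpa [hu] using hxn
    have hgin : g ^ (i * n) = 1 := by rw [pow_mul, hi, hun]
    have hdvd : k * n ∣ i * n := by
      have := (orderOf_dvd_iff_pow_eq_one).mpr hgin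
      rwa [horder, ← hnk, mul_comm n k] at this
    have hki : k ∣ i := (Nat.mul_dvd_mul_iff_right hnpos).mp hdvd
    obtain ⟨j, rfl⟩ := hki
    exact ⟨j, by rw [hi]; rfl⟩
  ext x
  simp only [Rset, Set.mem_setOf_eq]
  constructor
  · rintro ⟨y, hy, rfl⟩
    have hxn : (y ^ k) ^ n = 1 := by
      rw [← pow_mul, mul_comm k n, hnk, ← hcard]
      exact FiniteField.pow_card_sub_one_eq_one y hy
    obtain ⟨j, hj⟩ := key (y ^ k) (pow_ne_zero _ hy) hxn
    refine ⟨((g ^ (c * j) : Fˣ) : F), ?_, Units.ne_zero _, ?_⟩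
    · -- w^(p^a) = w
      have h1 : ((g ^ (c * j) : Fˣ) : F) ^ (p ^ a - 1) = 1 := by
        have : (g ^ (c * j)) ^ (p ^ a - 1) = 1 := by
          rw [← pow_mul, show c * j * (p ^ a - 1) = (p ^ m - 1) * j from by
            rw [mul_right_comm, hc1], pow_mul, hgpow, one_pow]
        calc ((g ^ (c * j) : Fˣ) : F) ^ (p ^ a - 1) = (((g ^ (c * j)) ^ (p ^ a - 1) : Fˣ) : F) := by
              push_cast; ring
          _ = 1 := by rw [this]; rfl
      calc ((g ^ (c * j) : Fˣ) : F) ^ p ^ a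
          = ((g ^ (c * j) : Fˣ) : F) ^ (p ^ a - 1) * ((g ^ (c * j) : Fˣ) : F) := by
            rw [← pow_succ, Nat.sub_add_cancel hpa1]
        _ = ((g ^ (c * j) : Fˣ) : F) := by rw [h1, one_mul]
    · -- w^ka = y^k
      calc ((g ^ (c * j) : Fˣ) : F) ^ ka = ((g ^ (c * j * ka) : Fˣ) : F) := by
            rw [← Units.val_pow_eq_pow_val, ← pow_mul]
        _ = ((g ^ (k * j) : Fˣ) : F) := by
            congr 2
            rw [mul_comm c j, mul_assoc, hck, mul_comm j k]
        _ = y ^ k := hj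
  · rintro ⟨w, hwp, hw0, rfl⟩
    have hw1 : w ^ (p ^ a - 1) = 1 := by
      have h1 : w ^ (p ^ a - 1) * w = 1 * w := by
        rw [← pow_succ, Nat.sub_add_cancel hpa1, one_mul, hwp]
      exact mul_right_cancel₀ hw0 h1
    have hxn : (w ^ ka) ^ n = 1 := by
      rw [← pow_mul, mul_comm ka n, hnka, hw1]
    obtain ⟨j, hj⟩ := key (w ^ ka) (pow_ne_zero _ hw0) hxn
    refine ⟨((g ^ j : Fˣ) : F), Units.ne_zero _, ?_⟩
    calc ((g ^ j : Fˣ) : F) ^ k = ((g ^ (j * k) : Fˣ) : F) := by rw [← Units.val_pow_eq_pow_val, ← pow_mul]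
      _ = w ^ ka := by rw [mul_comm j k]; exact hj
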